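/- Let p > 3 be a prime, r ≥ 1, and G = SL₂(p^r). For every n with 1 ≤ n ≤ p − 3, the F_p G-module V_n(p^r) does not lift to Z/p²Z. -/

import Mathlib

open MvPolynomial Matrix

noncomputable section

/-- The substitution action of a `2 × 2` matrix `g = (a b; c d)` on polynomials in two
variables, sending `x ↦ a·x + b·y` and `y ↦ c·x + d·y`. -/
def polySub {K : Type*} [CommSemiring K] (g : Matrix (Fin 2) (Fin 2) K) :
    MvPolynomial (Fin 2) K →ₐ[K] MvPolynomial (Fin 2) K :=
  MvPolynomial.aeval fun i => ∑ j, g i j • MvPolynomial.X j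

lemma polySub_mul {K : Type*} [CommSemiring K] (g h : Matrix (Fin 2) (Fin 2) K) :
    polySub (g * h) = (polySub h).comp (polySub g) := by
  apply MvPolynomial.algHom_ext
  intro i
  simp only [polySub, MvPolynomial.aeval_X, AlgHom.coe_comp, Function.comp_apply, map_sum,
    _root_.map_smul, Matrix.mul_apply, Finset.sum_smul, smul_smul, Finset.smul_sum]
  rw [Finset.sum_comm]

lemma polySub_one {K : Type*} [CommSemiring K] :
    polySub (1 : Matrix (Fin 2) (Fin 2) K) = AlgHom.id K _ := by
  apply MvPolynomial.algHom_ext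
  intro i
  simp [polySub, Matrix.one_apply, ite_smul]

lemma polySub_mem {K : Type*} [CommSemiring K] (g : Matrix (Fin 2) (Fin 2) K) {n : ℕ}
    {f : MvPolynomial (Fin 2) K} (hf : f ∈ homogeneousSubmodule (Fin 2) K n) :
    polySub g f ∈ homogeneousSubmodule (Fin 2) K n := by
  rw [mem_homogeneousSubmodule] at hf ⊢
  have h1 : ∀ i : Fin 2, MvPolynomial.IsHomogeneous (∑ j, g i j • (MvPolynomial.X j : MvPolynomial (Fin 2) K)) 1 := by
    intro i
    apply MvPolynomial.IsHomogeneous.sum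
    intro j _
    rw [MvPolynomial.smul_eq_C_mul]
    exact (MvPolynomial.isHomogeneous_X K j).C_mul _
  have h2 := hf.aeval (fun i => ∑ j, g i j • (MvPolynomial.X j : MvPolynomial (Fin 2) K)) h1
  rw [one_mul] at h2
  exact h2

/-- The (left) representation of `SL₂(K)` on the space `V_n` of homogeneous polynomials of
degree `n` in two variables over `K`, viewed as a representation over a subring `R`
(e.g. `R = 𝔽_p`) by restriction of scalars.  It corresponds to the classical right action
`x · g = a·x + b·y`, `y · g = c·x + d·y` for `g = (a b; c d)`. -/
def homPolyRep (K : Type*) [Field K] (R : Type*) [CommRing R] [Algebra R K] (n : ℕ) :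
    Representation R (Matrix.SpecialLinearGroup (Fin 2) K)
      (homogeneousSubmodule (Fin 2) K n) where
  toFun g := LinearMap.restrictScalars R
    ((polySub ((g⁻¹ : Matrix.SpecialLinearGroup (Fin 2) K) : Matrix (Fin 2) (Fin 2) K)).toLinearMap.restrict
      (p := homogeneousSubmodule (Fin 2) K n) (q := homogeneousSubmodule (Fin 2) K n)
      (fun _ hx => polySub_mem _ hx))
  map_one' := by
    refine LinearMap.ext fun x => Subtype.ext ?_
    simp [LinearMap.restrict_apply, polySub_one]
  map_mul' g h := by
    refine LinearMap.ext fun x => Subtype.ext ?_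
    simp [LinearMap.restrict_apply, _root_.mul_inv_rev, polySub_mul]

/-- The `𝔽_p SL₂(pʳ)`-module `V_n(pʳ)` of `n`-homogeneous polynomials in two variables over
the field with `pʳ` elements, as a representation of `SL₂(pʳ)` over `𝔽_p = ZMod p`. -/
def Vrep (p r : ℕ) [Fact p.Prime] (n : ℕ) :
    Representation (ZMod p) (Matrix.SpecialLinearGroup (Fin 2) (GaloisField p r))
      (homogeneousSubmodule (Fin 2) (GaloisField p r) n) :=
  homPolyRep (GaloisField p r) (ZMod p) n

/-- A representation `ρ` of `G` over `𝔽_p = ZMod p` *lifts along* a ring homomorphism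
`f : R →+* ZMod p` if the matrix representation `θ : G →* GLₘ(𝔽_p)` attached to a basis of the
module admits a homomorphism `θ̂ : G →* GLₘ(R)` whose entrywise reduction along `f` is `θ`. -/
def LiftsAlong {p : ℕ} {G V : Type*} [Group G] [AddCommGroup V] [Module (ZMod p) V]
    (ρ : Representation (ZMod p) G V) (R : Type*) [CommRing R] (f : R →+* ZMod p) : Prop :=
  ∃ (m : ℕ) (b : Module.Basis (Fin m) (ZMod p) V) (θ : G →* Matrix.GeneralLinearGroup (Fin m) R),
    ∀ g : G, ((θ g : Matrix (Fin m) (Fin m) R)).map f = LinearMap.toMatrix b b (ρ g)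


/-! ### Auxiliary lemmas -/

section AuxPoly

variable {K : Type*} [CommRing K]

/-- The substitution `x ↦ x + y`, `y ↦ y`. -/
def sigmaU (K : Type*) [CommRing K] : MvPolynomial (Fin 2) K →ₐ[K] MvPolynomial (Fin 2) K :=
  polySub !![1,1;0,1]

lemma sigmaU_X0 : sigmaU K (X 0) = X 0 + X 1 := by
  simp [sigmaU, polySub, Fin.sum_univ_two]

lemma sigmaU_X1 : sigmaU K (X 1) = X 1 := by
  simp [sigmaU, polySub, Fin.sum_univ_two]

/-- The difference operator `σ - 1`. -/
def deltaU (K : Type*) [CommRing K] : Module.End K (MvPolynomial (Fin 2) K) :=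
  (sigmaU K).toLinearMap - 1

lemma deltaU_apply (f : MvPolynomial (Fin 2) K) : deltaU K f = sigmaU K f - f := rfl

lemma deltaU_monomial (i j : ℕ) :
    deltaU K (X 0 ^ i * X 1 ^ j) =
      ∑ k ∈ Finset.range i, (i.choose k) • (X 0 ^ k * X 1 ^ (i - k + j)) := by
  rw [deltaU_apply, _root_.map_mul, map_pow, map_pow, sigmaU_X0, sigmaU_X1, add_pow]
  rw [Finset.sum_range_succ]
  simp only [Nat.sub_self, pow_zero, mul_one, Nat.choose_self, Nat.cast_one, add_mul,
    Finset.sum_mul]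
  rw [add_sub_cancel_right]
  refine Finset.sum_congr rfl fun k hk => ?_
  rw [pow_add, nsmul_eq_mul]
  ring

lemma deltaU_pow_monomial : ∀ i j : ℕ, ((deltaU K) ^ (i+1)) (X 0 ^ i * X 1 ^ j) = 0 := by
  intro i
  induction i using Nat.strong_induction_on with
  | _ i IH =>
    intro j
    rw [pow_succ, Module.End.mul_apply, deltaU_monomial, map_sum]
    refine Finset.sum_eq_zero fun k hk => ?_
    rw [Finset.mem_range] at hk
    have h : i - 1 - k + (k + 1) = i := by omega
    rw [map_nsmul, ← h, pow_add, Module.End.mul_apply, IH k hk, map_zero, smul_zero]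

lemma deltaU_pow_homog {n : ℕ} {f : MvPolynomial (Fin 2) K}
    (hf : f ∈ homogeneousSubmodule (Fin 2) K n) : ((deltaU K) ^ (n+1)) f = 0 := by
  rw [mem_homogeneousSubmodule] at hf
  conv_lhs => rw [← support_sum_monomial_coeff f]
  rw [map_sum]
  refine Finset.sum_eq_zero fun d hd => ?_
  have hdeg : d 0 + d 1 = n := by
    have h := hf (mem_support_iff.mp hd)
    rw [Finsupp.weight_apply, Finsupp.sum_fintype _ _ (by simp)] at h
    simpa [Fin.sum_univ_two] using h
  have hmon : (monomial d (coeff d f) : MvPolynomial (Fin 2) K)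
      = (coeff d f) • (X 0 ^ (d 0) * X 1 ^ (d 1)) := by
    rw [smul_eq_C_mul, monomial_eq]
    rw [Finsupp.prod_fintype _ _ (by simp), Fin.prod_univ_two]
  rw [hmon, _root_.map_smul]
  have h : n - d 0 + (d 0 + 1) = n + 1 := by omega
  rw [← h, pow_add, Module.End.mul_apply, deltaU_pow_monomial, map_zero, smul_zero]

end AuxPoly

section AuxMatrix

lemma pow_factor {R : Type*} [Ring R] {N E : R} (h : N = N^2 * E) :
    ∀ k : ℕ, ∃ D, N = N^(k+1) * D := by
  intro k
  induction k with
  | zero => exact ⟨1, by simp⟩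
  | succ k ih =>
    obtain ⟨D, hD⟩ := ih
    refine ⟨E * D, ?_⟩
    calc N = N^k * N * D := by rw [← pow_succ, ← hD]
    _ = N^k * (N^2 * E) * D := by rw [← h]
    _ = N^(k+1+1) * (E * D) := by rw [← mul_assoc, ← mul_assoc, ← pow_add]

variable {p : ℕ} [Fact p.Prime]

lemma zmod_sq_exists_div {x : ZMod (p^2)}
    (hx : ZMod.castHom (dvd_pow_self p two_ne_zero) (ZMod p) x = 0) :
    ∃ y : ZMod (p^2), x = (p : ℕ) • y := by
  haveI : NeZero (p^2) := ⟨pow_ne_zero 2 (Fact.out (p := p.Prime)).ne_zero⟩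
  have hval : ((x.val : ℕ) : ZMod p) = 0 := by
    rwa [ZMod.natCast_val, ← ZMod.castHom_apply (h := dvd_pow_self p two_ne_zero)]
  rw [ZMod.natCast_eq_zero_iff] at hval
  obtain ⟨t, ht⟩ := hval
  refine ⟨(t : ZMod (p^2)), ?_⟩
  rw [nsmul_eq_mul, ← Nat.cast_mul, ← ht, ZMod.natCast_zmod_val]

lemma zmod_sq_psmul_zero {x : ZMod (p^2)} (hx : (p : ℕ) • x = 0) :
    ZMod.castHom (dvd_pow_self p two_ne_zero) (ZMod p) x = 0 := by
  haveI : NeZero (p^2) := ⟨pow_ne_zero 2 (Fact.out (p := p.Prime)).ne_zero⟩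
  have hp : (p : ℕ) ∣ x.val := by
    have h1 : ((p * x.val : ℕ) : ZMod (p^2)) = 0 := by
      rw [Nat.cast_mul, ZMod.natCast_zmod_val]
      simpa [nsmul_eq_mul] using hx
    rw [ZMod.natCast_eq_zero_iff] at h1
    have h2 : p * p ∣ p * x.val := dvd_trans (dvd_of_eq (pow_two p).symm) h1
    exact (mul_dvd_mul_iff_left (a := p) (Fact.out (p := p.Prime)).ne_zero).mp h2
  rw [ZMod.castHom_apply, ← ZMod.natCast_val, ZMod.natCast_eq_zero_iff]
  exact hp

lemma key_matrix_lemma {m : ℕ} (hp : 3 < p) {s : ℕ} (hs1 : 1 ≤ s) (hs2 : s + 2 ≤ p)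
    {A : Matrix (Fin m) (Fin m) (ZMod (p^2))} (hA : A ^ p = 1)
    {N : Matrix (Fin m) (Fin m) (ZMod p)}
    (hred : A.map (ZMod.castHom (dvd_pow_self p two_ne_zero) (ZMod p)) = N + 1)
    (hNs : N ^ s = 0) : N = 0 := by
  set π := ZMod.castHom (dvd_pow_self p two_ne_zero) (ZMod p) with hπ
  set Pi' := (π.mapMatrix : Matrix (Fin m) (Fin m) (ZMod (p^2)) →+* Matrix (Fin m) (Fin m) (ZMod p)) with hPi'
  set X := A - 1 with hX
  have hX1 : X + 1 = A := by rw [hX, sub_add_cancel]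
  have hPi'X : Pi' X = N := by
    rw [hX, map_sub, _root_.map_one]
    show A.map π - 1 = N
    rw [hred, add_sub_cancel_right]
  have h1 : (∑ k ∈ Finset.range (p+1), X ^ k * (1:Matrix (Fin m) (Fin m) (ZMod (p^2))) ^ (p - k) * ((p.choose k : ℕ) : Matrix (Fin m) (Fin m) (ZMod (p^2)))) = 1 := by
    rw [← Commute.add_pow (Commute.one_right X), hX1, hA]
  simp only [one_pow, mul_one] at h1
  rw [Finset.sum_range_succ'] at h1
  simp only [pow_zero, Nat.choose_zero_right, Nat.cast_one, one_mul, mul_one] at h1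
  rw [add_eq_right] at h1
  have h3 := h1
  have hpeel : p - 1 + 1 = p := by omega
  rw [show Finset.range p = Finset.range ((p-1)+1) from by rw [hpeel]] at h3
  rw [Finset.sum_range_succ, hpeel, Nat.choose_self, Nat.cast_one, mul_one] at h3
  set c : ℕ → ℕ := fun k => p.choose k / p with hc
  have hcp : ∀ k, 0 < k → k < p → p * c k = p.choose k := by
    intro k h0 h1
    exact Nat.mul_div_cancel' ((Fact.out (p := p.Prime)).dvd_choose_self (by omega) h1)
  set F := ∑ k ∈ Finset.range (p-1), c (k+1) • X ^ k with hF
  have hsum : (∑ k ∈ Finset.range (p-1), X ^ (k+1) * ((p.choose (k+1) : ℕ) : Matrix (Fin m) (Fin m) (ZMod (p^2)))) = (p:ℕ) • (X * F) := by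
    rw [hF, Finset.mul_sum, Finset.smul_sum]
    refine Finset.sum_congr rfl fun k hk => ?_
    rw [Finset.mem_range] at hk
    rw [mul_smul_comm, ← pow_succ', smul_smul, hcp (k+1) (by omega) (by omega), nsmul_eq_mul]
    exact ((Nat.cast_commute _ _).eq).symm
  rw [hsum] at h3
  have hXs : Pi' (X ^ s) = 0 := by rw [map_pow, hPi'X, hNs]
  obtain ⟨W, hW⟩ : ∃ W, X ^ s = (p:ℕ) • W := by
    have hent : ∀ i j, π ((X ^ s) i j) = 0 := by
      intro i j
      have := Matrix.ext_iff.mpr hXs i j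
      simpa [hPi', RingHom.mapMatrix_apply, Matrix.map_apply] using this
    choose W hWe using fun i j => zmod_sq_exists_div (hent i j)
    exact ⟨Matrix.of W, by ext i j; exact hWe i j⟩
  have h6 : X ^ p = (p:ℕ) • (X ^ (p - s) * W) := by
    have hps : p - s + s = p := by omega
    have he : X ^ p = X ^ (p - s + s) := by rw [hps]
    rw [he, pow_add, hW, mul_smul_comm]
  rw [h6, ← smul_add] at h3
  have h8 : Pi' (X * F + X ^ (p-s) * W) = 0 := by
    ext i j
    show π ((X * F + X ^ (p-s) * W) i j) = 0
    have := Matrix.ext_iff.mpr h3 i j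
    simp only [Matrix.smul_apply, Matrix.zero_apply] at this
    exact zmod_sq_psmul_zero this
  set G := ∑ k ∈ Finset.range (p-2), c (k+2) • N ^ k with hG
  have hPiF : Pi' F = N * G + 1 := by
    rw [hF, map_sum]
    have : ∀ k ∈ Finset.range (p-1), Pi' (c (k+1) • X ^ k) = c (k+1) • N ^ k := by
      intro k _
      rw [map_nsmul, map_pow, hPi'X]
    rw [Finset.sum_congr rfl this]
    rw [show Finset.range (p-1) = Finset.range ((p-2)+1) from by congr 1; omega]
    rw [Finset.sum_range_succ']
    have hc1 : c 1 = 1 := by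
      simp only [hc, Nat.choose_one_right]
      exact Nat.div_self (by omega)
    rw [hc1, pow_zero, one_smul, hG, Finset.mul_sum]
    congr 1
    refine Finset.sum_congr rfl fun k _ => ?_
    rw [mul_smul_comm, ← pow_succ']
  have h9 : N * (N * G + 1) + N ^ (p-s) * Pi' W = 0 := by
    have h := h8
    rw [map_add, _root_.map_mul, _root_.map_mul, map_pow, hPi'X, hPiF] at h
    exact h
  rw [mul_add, mul_one] at h9
  have hN2 : N = N ^ 2 * (-(G + N ^ (p - s - 2) * Pi' W)) := by
    have hps : p - s = 2 + (p - s - 2) := by omega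
    have hN : N = -(N * (N * G) + N ^ (p-s) * Pi' W) :=
      eq_neg_of_add_eq_zero_left (by rw [← h9]; abel)
    rw [mul_neg, mul_add, ← mul_assoc (N^2), ← pow_add, ← hps]
    rw [← mul_assoc, ← pow_two] at hN
    exact hN
  obtain ⟨D, hD⟩ := pow_factor hN2 (s-1)
  rw [show s - 1 + 1 = s from by omega, hNs, zero_mul] at hD
  exact hD

end AuxMatrix

section AuxRep

lemma Vrep_apply_coe (p r : ℕ) [Fact p.Prime] (n : ℕ)
    (g : Matrix.SpecialLinearGroup (Fin 2) (GaloisField p r))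
    (v : homogeneousSubmodule (Fin 2) (GaloisField p r) n) :
    ((Vrep p r n g v : homogeneousSubmodule (Fin 2) (GaloisField p r) n) :
        MvPolynomial (Fin 2) (GaloisField p r))
      = polySub ((g⁻¹ : Matrix.SpecialLinearGroup (Fin 2) (GaloisField p r)) :
          Matrix (Fin 2) (Fin 2) (GaloisField p r)) ↑v := rfl

lemma unip_pow (K : Type*) [CommRing K] (k : ℕ) :
    (!![1, -1; 0, 1] : Matrix (Fin 2) (Fin 2) K) ^ k = !![1, -(k:K); 0, 1] := by
  induction k with
  | zero =>
    rw [pow_zero, Matrix.one_fin_two]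
    norm_num
  | succ k ih =>
    rw [pow_succ, ih, Matrix.mul_fin_two]
    push_cast
    congr 1 <;> ring

end AuxRep


set_option maxHeartbeats 1000000 in
set_option synthInstance.maxHeartbeats 1000000 in
/-- **Proposition 4.2.** For `p > 3` prime, `r ≥ 1` and `1 ≤ n ≤ p - 3`, the module
`V_n(pʳ)` for `SL₂(pʳ)` does not lift to `ℤ/p²ℤ`. -/
theorem generic_case_no_lift (p r : ℕ) [Fact p.Prime] (hp : 3 < p) (hr : 1 ≤ r)
    (n : ℕ) (hn1 : 1 ≤ n) (hn2 : n ≤ p - 3) :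
    ¬ LiftsAlong (Vrep p r n) (ZMod (p ^ 2))
        (ZMod.castHom (dvd_pow_self p two_ne_zero) (ZMod p)) := by
  intro hlift
  obtain ⟨m, b, θ, hθ⟩ := hlift
  set K := GaloisField p r with hKdef
  have hdet : Matrix.det (!![1, -1; 0, 1] : Matrix (Fin 2) (Fin 2) K) = 1 := by
    rw [Matrix.det_fin_two_of]; ring
  set u : Matrix.SpecialLinearGroup (Fin 2) K := ⟨!![1, -1; 0, 1], hdet⟩ with hu
  have hu_inv : ((u⁻¹ : Matrix.SpecialLinearGroup (Fin 2) K) :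
      Matrix (Fin 2) (Fin 2) K) = !![1, 1; 0, 1] := by
    rw [Matrix.SpecialLinearGroup.coe_inv]
    show Matrix.adjugate !![1,-1;0,1] = _
    rw [Matrix.adjugate_fin_two_of]
    norm_num
  have hu_pow : u ^ p = 1 := by
    apply Subtype.ext
    rw [Matrix.SpecialLinearGroup.coe_pow]
    show (!![1,-1;0,1] : Matrix (Fin 2) (Fin 2) K) ^ p = _
    rw [unip_pow, Matrix.SpecialLinearGroup.coe_one, Matrix.one_fin_two,
      CharP.cast_eq_zero K p]
    norm_num
  have hcoe : ∀ (k : ℕ) (v : homogeneousSubmodule (Fin 2) K n),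
      ((((Vrep p r n u - 1 : Module.End (ZMod p) (homogeneousSubmodule (Fin 2) K n)) ^ k) v :
          homogeneousSubmodule (Fin 2) K n) : MvPolynomial (Fin 2) K)
        = ((deltaU K) ^ k) (↑v : MvPolynomial (Fin 2) K) := by
    intro k
    induction k with
    | zero => intro v; simp
    | succ k ih =>
      intro v
      rw [pow_succ, Module.End.mul_apply, ih ((Vrep p r n u - 1) v)]
      have hv : ((((Vrep p r n u - 1 : Module.End (ZMod p) (homogeneousSubmodule (Fin 2) K n)) v) :
          homogeneousSubmodule (Fin 2) K n) : MvPolynomial (Fin 2) K)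
          = deltaU K (↑v : MvPolynomial (Fin 2) K) := by
        rw [LinearMap.sub_apply, Module.End.one_apply, Submodule.coe_sub, Vrep_apply_coe,
          hu_inv, deltaU_apply]
        rfl
      rw [hv, ← Module.End.mul_apply, ← pow_succ]
  have hend : (Vrep p r n u - 1 : Module.End (ZMod p) (homogeneousSubmodule (Fin 2) K n)) ^ (n+1)
      = 0 := by
    apply LinearMap.ext; intro v
    rw [LinearMap.zero_apply]
    apply Subtype.ext
    rw [hcoe, ZeroMemClass.coe_zero]
    exact deltaU_pow_homog v.2
  have hXn : (X 0 ^ n : MvPolynomial (Fin 2) K) ∈ homogeneousSubmodule (Fin 2) K n := by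
    rw [mem_homogeneousSubmodule]
    simpa using (isHomogeneous_X K (0 : Fin 2)).pow n
  have hneq : sigmaU K (X 0 ^ n : MvPolynomial (Fin 2) K) ≠ X 0 ^ n := by
    intro hcon
    rw [map_pow, sigmaU_X0] at hcon
    have h2 := congrArg (aeval (R := K)
      (fun i : Fin 2 => if i = 0 then (1 : Polynomial K) else Polynomial.X)) hcon
    simp only [map_pow, map_add, aeval_X, if_pos, if_neg (by norm_num : ¬(1 : Fin 2) = 0),
      one_pow] at h2
    have h3 := congrArg (fun q : Polynomial K => q.coeff 1) h2
    simp only [Polynomial.coeff_one_add_X_pow, Polynomial.coeff_one, Nat.choose_one_right] at h3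
    norm_num at h3
    rw [CharP.cast_eq_zero_iff K p n] at h3
    have := Nat.le_of_dvd (by omega) h3
    omega
  have hne : (Vrep p r n u - 1 : Module.End (ZMod p) (homogeneousSubmodule (Fin 2) K n)) ≠ 0 := by
    intro h0
    have hone : Vrep p r n u = 1 := by rwa [sub_eq_zero] at h0
    have h1 : Vrep p r n u ⟨X 0 ^ n, hXn⟩ = ⟨X 0 ^ n, hXn⟩ := by rw [hone]; rfl
    have h2 := congrArg
      (fun w : homogeneousSubmodule (Fin 2) K n => (w : MvPolynomial (Fin 2) K)) h1
    simp only [Vrep_apply_coe, hu_inv] at h2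
    exact hneq h2
  set π := ZMod.castHom (dvd_pow_self p two_ne_zero) (ZMod p) with hπ
  have hpow : ∀ (g : Module.End (ZMod p) (homogeneousSubmodule (Fin 2) K n)) (k : ℕ),
      (LinearMap.toMatrix b b g) ^ k = LinearMap.toMatrix b b (g ^ k) := by
    intro g k
    induction k with
    | zero => rw [pow_zero, pow_zero, LinearMap.toMatrix_one]
    | succ k ih => rw [pow_succ, pow_succ, ih, ← LinearMap.toMatrix_mul]
  set A : Matrix (Fin m) (Fin m) (ZMod (p^2)) :=
    ((θ u : Matrix.GeneralLinearGroup (Fin m) (ZMod (p^2))) :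
      Matrix (Fin m) (Fin m) (ZMod (p^2))) with hA
  have hApow : A ^ p = 1 := by
    rw [hA, ← Units.val_pow_eq_pow_val, ← map_pow, hu_pow, _root_.map_one, Units.val_one]
  have hredA : A.map π = (LinearMap.toMatrix b b (Vrep p r n u) - 1) + 1 := by
    rw [sub_add_cancel]
    exact hθ u
  have hsub : LinearMap.toMatrix b b (Vrep p r n u) - 1
      = LinearMap.toMatrix b b (Vrep p r n u - 1 : Module.End (ZMod p)
        (homogeneousSubmodule (Fin 2) K n)) := by
    rw [map_sub, LinearMap.toMatrix_one]
  have hNs : (LinearMap.toMatrix b b (Vrep p r n u) - 1) ^ (n+1) = 0 := by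
    rw [hsub, hpow, hend, _root_.map_zero]
  have hN0 := key_matrix_lemma (p := p) hp (s := n+1) (by omega) (by omega) hApow hredA hNs
  apply hne
  apply (LinearMap.toMatrix b b).injective
  rw [hsub] at hN0
  rw [hN0, _root_.map_zero]
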